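/- Let G be a group, let N₁ ⊇ N₂ ⊇ N₃ ⊇ … be a descending sequence of normal subgroups of G such that the natural map G → lim_m G/Nₘ to the inverse limit is bijective, and let 𝒰 : G → G be a group homomorphism with 𝒰(Nₘ) ⊆ Nₘ for all m. Assume 𝒰 is pointwise nilpotent modulo the filtration: for every g ∈ G and every m ≥ 1 there exists k ≥ 1 with 𝒰ᵏ(g) ∈ Nₘ. Then the map G → G defined by y ↦ 𝒰(y)⁻¹·y is bijective. -/

import Mathlib

/-- The natural map from `G` to the inverse limit of the quotients `G/Nₘ`. -/
def toInverseLimit {G : Type} [Group G] (N : ℕ → Subgroup G) [∀ m, (N m).Normal]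
    (hmono : ∀ m, N (m + 1) ≤ N m) :
    G → {x : ∀ m, G ⧸ N m //
      ∀ m, QuotientGroup.map (N (m + 1)) (N m) (MonoidHom.id G)
        (fun g hg => hmono m hg) (x (m + 1)) = x m} :=
  fun g => ⟨fun _ => QuotientGroup.mk g, fun _ => rfl⟩

namespace BijAux

variable {G : Type} [Group G]

/-- Partial products `pₖ = 𝒰^{k-1}(z) ⋯ 𝒰(z) z`. -/
def pseq (𝒰 : G →* G) (z : G) : ℕ → G
  | 0 => 1
  | k + 1 => 𝒰 (pseq 𝒰 z k) * z

lemma pseq_succ (𝒰 : G →* G) (z : G) (k : ℕ) :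
    pseq 𝒰 z (k + 1) = (⇑𝒰)^[k] z * pseq 𝒰 z k := by
  induction k with
  | zero => simp [pseq]
  | succ n ih =>
      show 𝒰 (pseq 𝒰 z (n + 1)) * z = (⇑𝒰)^[n+1] z * (𝒰 (pseq 𝒰 z n) * z)
      rw [ih, map_mul, mul_assoc, Function.iterate_succ_apply']

lemma iter_mem {N : Subgroup G} (𝒰 : G →* G) (hstab : ∀ g ∈ N, 𝒰 g ∈ N)
    {z : G} {k₀ : ℕ} (h : (⇑𝒰)^[k₀] z ∈ N) {k : ℕ} (hk : k₀ ≤ k) :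
    (⇑𝒰)^[k] z ∈ N := by
  obtain ⟨d, rfl⟩ := Nat.exists_eq_add_of_le hk
  clear hk
  rw [add_comm, Function.iterate_add_apply]
  induction d with
  | zero => exact h
  | succ n ih => rw [Function.iterate_succ_apply']; exact hstab _ ih

lemma pseq_eventually_const {N : Subgroup G} [N.Normal] (𝒰 : G →* G)
    (hstab : ∀ g ∈ N, 𝒰 g ∈ N) {z : G} {k₀ : ℕ} (h : (⇑𝒰)^[k₀] z ∈ N)
    {k : ℕ} (hk : k₀ ≤ k) :
    (QuotientGroup.mk (pseq 𝒰 z k) : G ⧸ N) = QuotientGroup.mk (pseq 𝒰 z k₀) := by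
  induction k, hk using Nat.le_induction with
  | base => rfl
  | succ n hn ih =>
      rw [← ih, QuotientGroup.eq, pseq_succ]
      have hm : (⇑𝒰)^[n] z ∈ N := iter_mem 𝒰 hstab h hn
      have hconj := Subgroup.Normal.conj_mem (inferInstance : N.Normal) _
        (N.inv_mem hm) (pseq 𝒰 z n)⁻¹
      simpa [mul_inv_rev, mul_assoc] using hconj

end BijAux

theorem bijective_of_pointwise_nilpotent_mod_filtration
    {G : Type} [Group G] (N : ℕ → Subgroup G) [∀ m, (N m).Normal]
    (hmono : ∀ m, N (m + 1) ≤ N m)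
    (hlim : Function.Bijective (toInverseLimit N hmono))
    (𝒰 : G →* G)
    (hstab : ∀ m, ∀ g ∈ N m, 𝒰 g ∈ N m)
    (hnil : ∀ (g : G) (m : ℕ), ∃ k : ℕ, 1 ≤ k ∧ (⇑𝒰)^[k] g ∈ N m) :
    Function.Bijective (fun y : G => (𝒰 y)⁻¹ * y) := by
  constructor
  · -- injectivity
    intro a b hab
    simp only at hab
    have key : a * b⁻¹ = 𝒰 a * (𝒰 b)⁻¹ := by
      have h : 𝒰 a * ((𝒰 a)⁻¹ * a) * b⁻¹ = 𝒰 a * ((𝒰 b)⁻¹ * b) * b⁻¹ := by rw [hab]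
      simpa [mul_assoc] using h
    have hfix : 𝒰 (a * b⁻¹) = a * b⁻¹ := by
      rw [map_mul, map_inv, key]
    have hiter : ∀ k, (⇑𝒰)^[k] (a * b⁻¹) = a * b⁻¹ := by
      intro k; induction k with
      | zero => rfl
      | succ n ih => rw [Function.iterate_succ_apply', ih, hfix]
    have hmem : ∀ m, a * b⁻¹ ∈ N m := by
      intro m
      obtain ⟨k, -, hk⟩ := hnil (a * b⁻¹) m
      rwa [hiter k] at hk
    have heq : toInverseLimit N hmono (a * b⁻¹) = toInverseLimit N hmono 1 := by
      apply Subtype.ext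
      funext m
      show (QuotientGroup.mk (a * b⁻¹) : G ⧸ N m) = QuotientGroup.mk 1
      rw [QuotientGroup.eq]
      simpa using (N m).inv_mem (hmem m)
    exact mul_inv_eq_one.mp (hlim.1 heq)
  · -- surjectivity
    intro z
    set p := BijAux.pseq 𝒰 z with hp
    have hkey : ∀ m, ∃ k, (⇑𝒰)^[k] z ∈ N m :=
      fun m => ⟨(hnil z m).choose, (hnil z m).choose_spec.2⟩
    choose K hK using hkey
    have hconst : ∀ m k₀ k, ((⇑𝒰)^[k₀] z ∈ N m) → k₀ ≤ k →
        (QuotientGroup.mk (p k) : G ⧸ N m) = QuotientGroup.mk (p k₀) :=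
      fun m k₀ k h hk => BijAux.pseq_eventually_const 𝒰 (hstab m) h hk
    set x : ∀ m, G ⧸ N m := fun m => QuotientGroup.mk (p (K m)) with hx
    have hcompat : ∀ m, QuotientGroup.map (N (m + 1)) (N m) (MonoidHom.id G)
        (fun g hg => hmono m hg) (x (m + 1)) = x m := by
      intro m
      show QuotientGroup.map _ _ _ _ (QuotientGroup.mk (p (K (m+1)))) =
        QuotientGroup.mk (p (K m))
      show (QuotientGroup.mk (p (K (m+1))) : G ⧸ N m) = QuotientGroup.mk (p (K m))
      have h1 : (⇑𝒰)^[K (m+1)] z ∈ N m := hmono m (hK (m+1))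
      calc (QuotientGroup.mk (p (K (m+1))) : G ⧸ N m)
          = QuotientGroup.mk (p (max (K m) (K (m+1)))) :=
            (hconst m (K (m+1)) _ h1 (le_max_right _ _)).symm
        _ = QuotientGroup.mk (p (K m)) := hconst m (K m) _ (hK m) (le_max_left _ _)
    obtain ⟨y, hy⟩ := hlim.2 ⟨x, hcompat⟩
    have hy' : ∀ m, (QuotientGroup.mk y : G ⧸ N m) = x m :=
      fun m => congrFun (congrArg Subtype.val hy) m
    refine ⟨y, ?_⟩
    show (𝒰 y)⁻¹ * y = z
    rw [inv_mul_eq_iff_eq_mul]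
    apply hlim.1
    apply Subtype.ext
    funext m
    show (QuotientGroup.mk y : G ⧸ N m) = QuotientGroup.mk (𝒰 y * z)
    have h1 : (QuotientGroup.mk y : G ⧸ N m) = QuotientGroup.mk (p (K m)) := hy' m
    have h2 : y⁻¹ * p (K m) ∈ N m := (QuotientGroup.eq).mp h1
    have h3 : (𝒰 y)⁻¹ * 𝒰 (p (K m)) ∈ N m := by
      have := hstab m _ h2
      simpa [map_mul, map_inv] using this
    have h4 : (QuotientGroup.mk (𝒰 y * z) : G ⧸ N m) = QuotientGroup.mk (𝒰 (p (K m)) * z) := by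
      rw [QuotientGroup.eq]
      have hconj := Subgroup.Normal.conj_mem (inferInstance : (N m).Normal) _ h3 z⁻¹
      simpa [mul_inv_rev, mul_assoc] using hconj
    have h5 : 𝒰 (p (K m)) * z = p (K m + 1) := rfl
    rw [h4, h5, hconst m (K m) (K m + 1) (hK m) (Nat.le_succ _), ← h1]
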